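/- Every atomic weakly-reversible CRN is non-catalytic, and hence every weakly-reversible atomic CRN has no critical siphons. -/

import Mathlib

open MvPolynomial Relation

/-- A chemical reaction network on `s` species: a finite directed graph whose
vertices are labeled by distinct monomials (exponent vectors). -/
structure CRN (s : ℕ) where
  n : ℕ
  edge : Fin n → Fin n → Prop
  ψ : Fin n → (Fin s → ℕ)
  inj : Function.Injective ψ

variable {s : ℕ}

/-- Weak reversibility: every connected component of the reaction graph is
strongly connected, i.e. undirected reachability implies directed reachability. -/
def CRN.weaklyReversible (G : CRN s) : Prop :=
  ∀ i j, Relation.ReflTransGen (fun a b => G.edge a b ∨ G.edge b a) i j →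
    Relation.ReflTransGen G.edge i j

/-- Directed edge of the event-graph: `(N·ψ i, N·ψ j)` for an edge `(i,j)` of `G`
and a monic monomial `N` (exponent vector `c`). -/
def CRN.eventEdge (G : CRN s) (M N : Fin s → ℕ) : Prop :=
  ∃ i j c, G.edge i j ∧ M = c + G.ψ i ∧ N = c + G.ψ j

/-- Directed reachability in the event-graph. -/
def CRN.eventReach (G : CRN s) (M N : Fin s → ℕ) : Prop :=
  Relation.ReflTransGen G.eventEdge M N

/-- Path-connectedness (in the undirected sense) in the event-graph. -/
def CRN.connected (G : CRN s) (M N : Fin s → ℕ) : Prop :=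
  Relation.ReflTransGen (fun a b => G.eventEdge a b ∨ G.eventEdge b a) M N

/-- gcd of two monomials, as exponent vectors. -/
def mgcd (M N : Fin s → ℕ) : Fin s → ℕ := fun i => min (M i) (N i)

/-- A weakly-reversible CRN is catalytic iff some path-connected monomials `M, N`
in the event-graph become disconnected after dividing by their gcd. -/
def CRN.catalytic (G : CRN s) : Prop :=
  ∃ M N : Fin s → ℕ, G.connected M N ∧
    ¬ G.connected (M - mgcd M N) (N - mgcd M N)

/-- The monic monomial with exponent vector `e`, as a polynomial. -/
noncomputable def mon (k : Type*) [CommSemiring k] (e : Fin s → ℕ) :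
    MvPolynomial (Fin s) k :=
  MvPolynomial.monomial (Finsupp.equivFunOnFinite.symm e) 1

/-- The set of binomials of the associated event-system `E_G` (one binomial for
each edge of the underlying undirected graph of `G`). -/
def CRN.eventSystem (G : CRN s) (k : Type*) [CommRing k] :
    Set (MvPolynomial (Fin s) k) :=
  {p | ∃ i j, (G.edge i j ∨ G.edge j i) ∧ p = mon k (G.ψ i) - mon k (G.ψ j)}

/-- The ideal `(E_G)` generated by the associated event-system. -/
noncomputable def CRN.eventIdeal (G : CRN s) (k : Type*) [CommRing k] :
    Ideal (MvPolynomial (Fin s) k) :=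
  Ideal.span (G.eventSystem k)

/-- The stoichiometric subspace of `G`. -/
def CRN.stoich (G : CRN s) : Submodule ℝ (Fin s → ℝ) :=
  Submodule.span ℝ
    {v | ∃ i j, G.edge i j ∧ v = fun t => (G.ψ j t : ℝ) - (G.ψ i t : ℝ)}

/-- `Z` is a siphon of `G`. -/
def CRN.siphon (G : CRN s) (Z : Set (Fin s)) : Prop :=
  Z.Nonempty ∧ ∀ i j, G.edge i j →
    (∃ l ∈ Z, G.ψ j l ≠ 0) → (∃ l ∈ Z, G.ψ i l ≠ 0)

/-- `Z` is a critical siphon of `G`: a siphon whose zero pattern is realized by a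
nonnegative point whose invariant polyhedron meets the positive orthant. -/
def CRN.criticalSiphon (G : CRN s) (Z : Set (Fin s)) : Prop :=
  G.siphon Z ∧ ∃ z : Fin s → ℝ, (∀ i, 0 ≤ z i) ∧ Z = {i | z i = 0} ∧
    ∃ p : Fin s → ℝ, (∀ i, 0 < p i) ∧ p - z ∈ G.stoich

/-- The underlying undirected CRN (every reaction made reversible). -/
def CRN.sym (G : CRN s) : CRN s :=
  ⟨G.n, fun i j => G.edge i j ∨ G.edge j i, G.ψ, G.inj⟩

/-- A point `a` is a zero of all binomials in the event-system of `G`. -/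
def CRN.vanishesAt (G : CRN s) {k : Type*} [CommRing k] (a : Fin s → k) : Prop :=
  ∀ i j, G.edge i j → ∏ t, a t ^ G.ψ i t = ∏ t, a t ^ G.ψ j t

/-- The saturation `I : f^∞`, as a set. -/
def satSet {R : Type*} [CommRing R] (I : Ideal R) (f : R) : Set R :=
  {g | ∃ m : ℕ, 0 < m ∧ f ^ m * g ∈ I}


/-- `x_i` is an atom of `G`: the monomial `x_i` is an isolated node of the
event-graph. -/
def CRN.isAtomSpecies {s : ℕ} (G : CRN s) (i : Fin s) : Prop :=
  ∀ M : Fin s → ℕ, ¬ G.eventEdge (Pi.single i 1) M ∧ ¬ G.eventEdge M (Pi.single i 1)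

/-- An atomic monomial: all its variables are atoms. -/
def CRN.atomicMon {s : ℕ} (G : CRN s) (M : Fin s → ℕ) : Prop :=
  ∀ j, M j ≠ 0 → G.isAtomSpecies j

/-- `G` is atomic: every connected component of the event-graph contains
exactly one atomic monomial. -/
def CRN.atomic {s : ℕ} (G : CRN s) : Prop :=
  ∀ M : Fin s → ℕ, ∃! A : Fin s → ℕ, G.atomicMon A ∧ G.connected M A


section Aux

variable (G : CRN s)

lemma CRN.conn_symm {M N} (h : G.connected M N) : G.connected N M :=
  (@Relation.ReflTransGen.symmetric _ _ ⟨fun _ _ h => h.symm⟩).symm _ _ h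

lemma CRN.eventEdge_add {M N} (c : Fin s → ℕ) (h : G.eventEdge M N) :
    G.eventEdge (c + M) (c + N) := by
  obtain ⟨i, j, d, hij, rfl, rfl⟩ := h
  exact ⟨i, j, c + d, hij, by rw [add_assoc], by rw [add_assoc]⟩

lemma CRN.conn_add_left {M N} (c : Fin s → ℕ) (h : G.connected M N) :
    G.connected (c + M) (c + N) := by
  induction h with
  | refl => exact .refl
  | tail _ h2 ih =>
      exact ih.tail (h2.imp (G.eventEdge_add c) (G.eventEdge_add c))

lemma CRN.conn_add {M N P Q} (h1 : G.connected M N) (h2 : G.connected P Q) :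
    G.connected (M + P) (N + Q) := by
  have a : G.connected (M + P) (N + P) := by
    rw [add_comm M P, add_comm N P]; exact G.conn_add_left P h1
  exact a.trans (G.conn_add_left N h2)

lemma CRN.conn_edge {i j} (h : G.edge i j) : G.connected (G.ψ i) (G.ψ j) :=
  Relation.ReflTransGen.single
    (Or.inl ⟨i, j, 0, h, (zero_add _).symm, (zero_add _).symm⟩)

lemma CRN.conn_smul (a : ℕ) {M N} (h : G.connected M N) :
    G.connected (a • M) (a • N) := by
  induction a with
  | zero => simp only [zero_smul]; exact .refl
  | succ a ih => simp only [succ_nsmul]; exact G.conn_add ih h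

lemma CRN.conn_sum {ι : Type*} (t : Finset ι) (f g : ι → Fin s → ℕ)
    (h : ∀ k ∈ t, G.connected (f k) (g k)) :
    G.connected (∑ k ∈ t, f k) (∑ k ∈ t, g k) := by
  classical
  induction t using Finset.induction with
  | empty => simp only [Finset.sum_empty]; exact .refl
  | insert _ _ hx ih =>
      rw [Finset.sum_insert hx, Finset.sum_insert hx]
      exact G.conn_add (h _ (Finset.mem_insert_self _ _))
        (ih fun k hk => h k (Finset.mem_insert_of_mem hk))

lemma CRN.reach_of_edgePath {i j} (h : Relation.ReflTransGen G.edge i j)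
    (c : Fin s → ℕ) : G.eventReach (c + G.ψ i) (c + G.ψ j) := by
  induction h with
  | refl => exact .refl
  | tail _ h2 ih => exact ih.tail ⟨_, _, c, h2, rfl, rfl⟩

lemma CRN.reach_of_conn (hwr : G.weaklyReversible) {M N} (h : G.connected M N) :
    G.eventReach M N := by
  induction h with
  | refl => exact .refl
  | tail _ h2 ih =>
      rcases h2 with he | he
      · exact ih.tail he
      · obtain ⟨i, j, c, hij, rfl, rfl⟩ := he
        exact ih.trans (G.reach_of_edgePath (hwr j i (.single (Or.inr hij))) c)

lemma CRN.siphon_closed {Z : Set (Fin s)} (hs : G.siphon Z) {P Q}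
    (h : G.eventReach P Q) (hP : ∀ l ∈ Z, P l = 0) : ∀ l ∈ Z, Q l = 0 := by
  induction h with
  | refl => exact hP
  | tail _ h2 ih =>
      obtain ⟨i, j, c, hij, rfl, rfl⟩ := h2
      have hci : ∀ l ∈ Z, c l = 0 ∧ G.ψ i l = 0 := by
        intro l hl
        have := ih l hl
        simp only [Pi.add_apply] at this
        omega
      have h1 : ¬ ∃ l ∈ Z, G.ψ i l ≠ 0 := by
        rintro ⟨l, hl, hne⟩; exact hne (hci l hl).2
      have h2 := mt (hs.2 i j hij) h1
      push_neg at h2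
      intro l hl
      simp only [Pi.add_apply, (hci l hl).1, h2 l hl, add_zero]

lemma CRN.noncat (hat : G.atomic) {M N} (h : G.connected M N) :
    G.connected (M - mgcd M N) (N - mgcd M N) := by
  classical
  set A : (Fin s → ℕ) → (Fin s → ℕ) := fun M => (hat M).choose with hA
  have hatomA : ∀ M, G.atomicMon (A M) := fun M => (hat M).choose_spec.1.1
  have hconnA : ∀ M, G.connected M (A M) := fun M => (hat M).choose_spec.1.2
  have hAeq : ∀ {B}, G.atomicMon B → A B = B :=
    fun {B} hB => ((hat B).choose_spec.2 B ⟨hB, .refl⟩).symm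
  have hinv : ∀ {P Q}, G.connected P Q → A P = A Q := by
    intro P Q hPQ
    exact ((hat P).choose_spec.2 (A Q) ⟨hatomA Q, hPQ.trans (hconnA Q)⟩).symm
  have hadd : ∀ c M, A (c + M) = A c + A M := by
    intro c M
    have h1 : A (c + M) = A (c + A M) := hinv (G.conn_add_left c (hconnA M))
    have h2 : A (c + A M) = A (A c + A M) := by
      apply hinv
      rw [add_comm c (A M), add_comm (A c) (A M)]
      exact G.conn_add_left (A M) (hconnA c)
    have h3 : G.atomicMon (A c + A M) := by
      intro j hj
      by_cases h0 : A c j = 0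
      · exact hatomA M j (by simpa [h0] using hj)
      · exact hatomA c j h0
    rw [h1, h2, hAeq h3]
  set g := mgcd M N with hg
  have hMg : g + (M - g) = M := by
    funext t
    simp only [Pi.add_apply, Pi.sub_apply, hg, mgcd]
    omega
  have hNg : g + (N - g) = N := by
    funext t
    simp only [Pi.add_apply, Pi.sub_apply, hg, mgcd]
    omega
  have key : A g + A (M - g) = A g + A (N - g) := by
    rw [← hadd, ← hadd, hMg, hNg]
    exact hinv h
  have heq : A (M - g) = A (N - g) := add_left_cancel key
  have c2 : G.connected (A (M - g)) (N - g) := by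
    rw [heq]; exact G.conn_symm (hconnA (N - g))
  exact (hconnA (M - g)).trans c2

lemma CRN.exists_int_combo (Z : Set (Fin s)) (z p : Fin s → ℝ)
    (hzZ : ∀ t ∈ Z, z t = 0) (hp : ∀ t, 0 < p t) (hmem : p - z ∈ G.stoich) :
    ∃ (m : ℕ) (I J : Fin m → Fin G.n) (c : Fin m → ℤ),
      (∀ k, G.edge (I k) (J k)) ∧
      ∀ t ∈ Z, 0 < ∑ k, c k * ((G.ψ (J k) t : ℤ) - (G.ψ (I k) t : ℤ)) := by
  classical
  rw [CRN.stoich] at hmem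
  obtain ⟨m, a, w, hw⟩ := Submodule.mem_span_set'.1 hmem
  choose I J hIJ hWeq using fun k => (w k).2
  set F : (Fin m → ℝ) → (Fin s → ℝ) :=
    fun b t => ∑ k, b k * ((G.ψ (J k) t : ℝ) - (G.ψ (I k) t : ℝ)) with hF
  have hFa : ∀ t ∈ Z, 0 < F a t := by
    intro t ht
    have he : F a t = (p - z) t := by
      rw [← hw]
      simp only [hF, Finset.sum_apply, Pi.smul_apply, smul_eq_mul]
      exact Finset.sum_congr rfl fun k _ => by rw [hWeq k]
    rw [he, Pi.sub_apply, hzZ t ht, sub_zero]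
    exact hp t
  set U : Set (Fin m → ℝ) := {b | ∀ t, t ∈ Z → 0 < F b t} with hU
  have hUopen : IsOpen U := by
    have : U = ⋂ t : Fin s, {b | t ∈ Z → 0 < F b t} := by
      ext b; simp [hU, Set.mem_iInter]
    rw [this]
    apply isOpen_iInter_of_finite
    intro t
    by_cases ht : t ∈ Z
    · have he : {b : Fin m → ℝ | t ∈ Z → 0 < F b t} = {b | 0 < F b t} := by
        ext b; simp [ht]
      rw [he]
      exact isOpen_lt continuous_const
        (continuous_finset_sum _ fun k _ => (continuous_apply k).mul continuous_const)
    · have he : {b : Fin m → ℝ | t ∈ Z → 0 < F b t} = Set.univ := by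
        ext b; simp [ht]
      rw [he]; exact isOpen_univ
  have hdense : Dense (Set.pi Set.univ fun _ : Fin m => Set.range ((↑) : ℚ → ℝ)) :=
    dense_pi Set.univ fun _ _ => Rat.denseRange_cast
  obtain ⟨b, hbU, hbQ⟩ := hdense.inter_open_nonempty U hUopen ⟨a, fun t ht => hFa t ht⟩
  have hbQ' : ∀ k, ∃ r : ℚ, (r : ℝ) = b k := fun k => hbQ k (Set.mem_univ k)
  choose q hq using hbQ'
  have hqpos : ∀ t ∈ Z, 0 < ∑ k, q k * ((G.ψ (J k) t : ℚ) - (G.ψ (I k) t : ℚ)) := by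
    intro t ht
    have h1 : (0 : ℝ) < ∑ k, (q k : ℝ) * ((G.ψ (J k) t : ℝ) - (G.ψ (I k) t : ℝ)) := by
      have := hbU t ht
      simp only [hF] at this
      simpa only [hq] using this
    have h2 : ((∑ k, q k * ((G.ψ (J k) t : ℚ) - (G.ψ (I k) t : ℚ)) : ℚ) : ℝ)
        = ∑ k, (q k : ℝ) * ((G.ψ (J k) t : ℝ) - (G.ψ (I k) t : ℝ)) := by
      push_cast; ring
    exact_mod_cast h2 ▸ h1
  set D : ℚ := ∏ k, ((q k).den : ℚ) with hD
  have hDpos : 0 < D := Finset.prod_pos fun k _ => by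
    exact_mod_cast (q k).pos
  refine ⟨m, I, J, fun k => (q k).num * ∏ l ∈ Finset.univ.erase k, ((q l).den : ℤ),
    hIJ, ?_⟩
  intro t ht
  set c : Fin m → ℤ := fun k => (q k).num * ∏ l ∈ Finset.univ.erase k, ((q l).den : ℤ)
    with hc
  have hck : ∀ k, (c k : ℚ) = q k * D := by
    intro k
    have hden : ((q k).den : ℚ) ≠ 0 := by
      exact_mod_cast (q k).den_nz
    have hnum : ((q k).num : ℚ) = q k * ((q k).den : ℚ) :=
      (div_eq_iff hden).1 (Rat.num_div_den (q k))
    have hprod : D = ((q k).den : ℚ) * ∏ l ∈ Finset.univ.erase k, ((q l).den : ℚ) := by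
      rw [hD, ← Finset.mul_prod_erase _ _ (Finset.mem_univ k)]
    rw [hc]
    push_cast
    rw [hnum, hprod]
    ring
  have hgoal : (0 : ℚ) < ∑ k, (c k : ℚ) * ((G.ψ (J k) t : ℚ) - (G.ψ (I k) t : ℚ)) := by
    have he : ∑ k, (c k : ℚ) * ((G.ψ (J k) t : ℚ) - (G.ψ (I k) t : ℚ))
        = D * ∑ k, q k * ((G.ψ (J k) t : ℚ) - (G.ψ (I k) t : ℚ)) := by
      rw [Finset.mul_sum]
      exact Finset.sum_congr rfl fun k _ => by rw [hck k]; ring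
    rw [he]
    exact mul_pos hDpos (hqpos t ht)
  have hcast : ((∑ k, c k * ((G.ψ (J k) t : ℤ) - (G.ψ (I k) t : ℤ)) : ℤ) : ℚ)
      = ∑ k, (c k : ℚ) * ((G.ψ (J k) t : ℚ) - (G.ψ (I k) t : ℚ)) := by
    push_cast; ring
  exact_mod_cast hcast ▸ hgoal

end Aux

/-- Atomic weakly-reversible CRNs are non-catalytic and have no critical siphons. -/
theorem atomic_not_catalytic_no_criticalSiphon {s : ℕ} (G : CRN s)
    (hwr : G.weaklyReversible) (hat : G.atomic) :
    ¬ G.catalytic ∧ ∀ Z : Set (Fin s), ¬ G.criticalSiphon Z := by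
  have noncata : ¬ G.catalytic := by
    rintro ⟨M, N, h, hn⟩
    exact hn (G.noncat hat h)
  refine ⟨noncata, ?_⟩
  rintro Z ⟨hsiph, z, hz0, hZ, p, hp, hmem⟩
  obtain ⟨l0, hl0⟩ := hsiph.1
  have hzZ : ∀ t ∈ Z, z t = 0 := fun t ht => by rw [hZ] at ht; exact ht
  obtain ⟨m, I, J, c, hIJ, hpos⟩ := G.exists_int_combo Z z p hzZ hp hmem
  classical
  set a : Fin m → ℕ := fun k => (c k).toNat with ha
  set b : Fin m → ℕ := fun k => (-(c k)).toNat with hb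
  set M : Fin s → ℕ := ∑ k, (a k • G.ψ (I k) + b k • G.ψ (J k)) with hM
  set N : Fin s → ℕ := ∑ k, (a k • G.ψ (J k) + b k • G.ψ (I k)) with hN
  have hconn : G.connected M N := by
    apply G.conn_sum
    intro k _
    exact G.conn_add (G.conn_smul (a k) (G.conn_edge (hIJ k)))
      (G.conn_smul (b k) (G.conn_symm (G.conn_edge (hIJ k))))
  have hdiff : ∀ t, (N t : ℤ) - (M t : ℤ)
      = ∑ k, c k * ((G.ψ (J k) t : ℤ) - (G.ψ (I k) t : ℤ)) := by
    intro t
    have hMt : (M t : ℤ)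
        = ∑ k, ((a k : ℤ) * (G.ψ (I k) t : ℤ) + (b k : ℤ) * (G.ψ (J k) t : ℤ)) := by
      rw [hM]
      simp only [Finset.sum_apply, Pi.add_apply, Pi.smul_apply, smul_eq_mul]
      push_cast
      rfl
    have hNt : (N t : ℤ)
        = ∑ k, ((a k : ℤ) * (G.ψ (J k) t : ℤ) + (b k : ℤ) * (G.ψ (I k) t : ℤ)) := by
      rw [hN]
      simp only [Finset.sum_apply, Pi.add_apply, Pi.smul_apply, smul_eq_mul]
      push_cast
      rfl
    rw [hMt, hNt, ← Finset.sum_sub_distrib]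
    refine Finset.sum_congr rfl fun k _ => ?_
    have hab : (a k : ℤ) - (b k : ℤ) = c k := Int.toNat_sub_toNat_neg (c k)
    linear_combination ((G.ψ (J k) t : ℤ) - (G.ψ (I k) t : ℤ)) * hab
  have hMN : ∀ t ∈ Z, M t < N t := by
    intro t ht
    have h1 := hpos t ht
    rw [← hdiff t] at h1
    omega
  set g := mgcd M N with hg
  have hM0 : ∀ l ∈ Z, (M - g) l = 0 := by
    intro l hl
    have := hMN l hl
    simp only [Pi.sub_apply, hg, mgcd]
    omega
  have hN0 : (N - g) l0 ≠ 0 := by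
    have := hMN l0 hl0
    simp only [Pi.sub_apply, hg, mgcd]
    omega
  have hnc : G.connected (M - g) (N - g) := G.noncat hat hconn
  have hreach : G.eventReach (M - g) (N - g) := G.reach_of_conn hwr hnc
  exact hN0 (G.siphon_closed hsiph hreach hM0 l0 hl0)
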